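/- Let m ∈ ℕ, let F, G : ℝ × ℝ^m → ℝ^m be continuously differentiable, let X₀ ∈ ℝ^m, T > 0 and κ₀ > 0. Assume Y : [0,T] → ℝ^m satisfies Y'(t) = F(t, Y(t)) with Y(0) = X₀, and that for every κ ∈ (0,κ₀] the map X_κ : [0,T] → ℝ^m satisfies X_κ'(t) = F(t, X_κ(t)) + κ·G(t, X_κ(t)) with X_κ(0) = X₀, all X_κ taking values in a fixed compact set. Then there exist t₀ ∈ (0,T], κ₁ ∈ (0,κ₀] and C > 0 such that ‖X_κ(t) − Y(t) − κ·t·G(0,X₀)‖ ≤ C·κ·t² for all t ∈ [0,t₀] and all κ ∈ (0,κ₁]. In particular ‖X_κ(t) − Y(t)‖ = κ·t·‖G(0,X₀)‖ + O(κ t²). -/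

import Mathlib

open Set Metric Real

lemma exp_aux {x : ℝ} (hx : 0 ≤ x) : Real.exp x - 1 ≤ x * Real.exp x := by
  have h1 : 1 - x ≤ Real.exp (-x) := by linarith [Real.add_one_le_exp (-x)]
  have h2 : Real.exp x * (1 - x) ≤ Real.exp x * Real.exp (-x) :=
    mul_le_mul_of_nonneg_left h1 (Real.exp_pos x).le
  rw [← Real.exp_add, add_neg_cancel, Real.exp_zero] at h2
  nlinarith

lemma gronwall_aux {K ε x : ℝ} (hK : 0 ≤ K) (hε : 0 ≤ ε) (hx : 0 ≤ x) :
    gronwallBound 0 K ε x ≤ ε * x * Real.exp (K * x) := by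
  rcases eq_or_lt_of_le hK with h | h
  · rw [← h, gronwallBound_K0]
    simp [zero_mul, Real.exp_zero]
  · rw [gronwallBound_of_K_ne_0 (ne_of_gt h)]
    have h1 : Real.exp (K * x) - 1 ≤ (K * x) * Real.exp (K * x) :=
      exp_aux (by positivity)
    have : ε / K * (Real.exp (K * x) - 1) ≤ ε / K * ((K * x) * Real.exp (K * x)) := by
      apply mul_le_mul_of_nonneg_left h1 (by positivity)
    calc 0 * Real.exp (K * x) + ε / K * (Real.exp (K * x) - 1)
        ≤ ε / K * ((K * x) * Real.exp (K * x)) := by linarith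
      _ = ε * x * Real.exp (K * x) := by field_simp

set_option maxHeartbeats 1600000 in
/-- Perturbation of an ODE by a small vector field `κ·G`: first-order expansion
`X_κ(t) = Y(t) + κ t G(0,X₀) + O(κ t²)` for small times and small `κ`. -/
theorem stmt_0 (m : ℕ)
    (F G : ℝ × EuclideanSpace ℝ (Fin m) → EuclideanSpace ℝ (Fin m))
    (hF : ContDiff ℝ 1 F) (hG : ContDiff ℝ 1 G)
    (X₀ : EuclideanSpace ℝ (Fin m)) (T κ₀ : ℝ) (hT : 0 < T) (hκ₀ : 0 < κ₀)
    (Y : ℝ → EuclideanSpace ℝ (Fin m))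
    (hY : ∀ t ∈ Set.Icc (0:ℝ) T, HasDerivAt Y (F (t, Y t)) t)
    (hY0 : Y 0 = X₀)
    (X : ℝ → ℝ → EuclideanSpace ℝ (Fin m))
    (hX : ∀ κ ∈ Set.Ioc (0:ℝ) κ₀, ∀ t ∈ Set.Icc (0:ℝ) T,
      HasDerivAt (X κ) (F (t, X κ t) + κ • G (t, X κ t)) t)
    (hX0 : ∀ κ ∈ Set.Ioc (0:ℝ) κ₀, X κ 0 = X₀)
    (K : Set (EuclideanSpace ℝ (Fin m))) (hK : IsCompact K)
    (hXK : ∀ κ ∈ Set.Ioc (0:ℝ) κ₀, ∀ t ∈ Set.Icc (0:ℝ) T, X κ t ∈ K) :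
    ∃ t₀ ∈ Set.Ioc (0:ℝ) T, ∃ κ₁ ∈ Set.Ioc (0:ℝ) κ₀, ∃ C > (0:ℝ),
      ∀ t ∈ Set.Icc (0:ℝ) t₀, ∀ κ ∈ Set.Ioc (0:ℝ) κ₁,
        ‖X κ t - Y t - (κ * t) • G (0, X₀)‖ ≤ C * κ * t ^ 2 := by
  classical
  -- continuity of Y on [0,T]
  have hYc : ContinuousOn Y (Icc 0 T) := fun s hs =>
    (hY s hs).continuousAt.continuousWithinAt
  -- compact sets
  have hKY : IsCompact (K ∪ Y '' Icc 0 T) :=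
    hK.union ((isCompact_Icc).image_of_continuousOn hYc)
  have hS : IsCompact ((Icc (0:ℝ) T) ×ˢ (K ∪ Y '' Icc 0 T)) :=
    isCompact_Icc.prod hKY
  obtain ⟨R, hR⟩ := hS.isBounded.subset_closedBall (0 : ℝ × EuclideanSpace ℝ (Fin m))
  set B : Set (ℝ × EuclideanSpace ℝ (Fin m)) := closedBall 0 R with hBdef
  have hBconv : Convex ℝ B := convex_closedBall _ _
  have hBcomp : IsCompact B := isCompact_closedBall _ _
  -- membership facts
  have hYmem : ∀ s ∈ Icc (0:ℝ) T, (s, Y s) ∈ B := fun s hs =>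
    hR ⟨hs, Or.inr ⟨s, hs, rfl⟩⟩
  have hXmem : ∀ κ ∈ Ioc (0:ℝ) κ₀, ∀ s ∈ Icc (0:ℝ) T, (s, X κ s) ∈ B :=
    fun κ hκ s hs => hR ⟨hs, Or.inl (hXK κ hκ s hs)⟩
  have h0mem : ((0:ℝ), X₀) ∈ B := by
    refine hR ⟨⟨le_refl 0, hT.le⟩, Or.inr ⟨0, ⟨le_refl 0, hT.le⟩, hY0⟩⟩
  -- Lipschitz constants for F and G on B
  obtain ⟨LF', hLF'⟩ := hBcomp.exists_bound_of_continuousOn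
    ((hF.continuous_fderiv one_ne_zero).continuousOn (s := B))
  obtain ⟨LG', hLG'⟩ := hBcomp.exists_bound_of_continuousOn
    ((hG.continuous_fderiv one_ne_zero).continuousOn (s := B))
  set LF : ℝ := max LF' 0 with hLFdef
  set LG : ℝ := max LG' 0 with hLGdef
  have hLF0 : 0 ≤ LF := le_max_right _ _
  have hLG0 : 0 ≤ LG := le_max_right _ _
  have lipF : ∀ p ∈ B, ∀ q ∈ B, ‖F p - F q‖ ≤ LF * ‖p - q‖ := by
    intro p hp q hq
    exact hBconv.norm_image_sub_le_of_norm_fderiv_le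
      (fun x _ => (hF.differentiable one_ne_zero).differentiableAt)
      (fun x hx => le_trans (hLF' x hx) (le_max_left _ _)) hq hp
  have lipG : ∀ p ∈ B, ∀ q ∈ B, ‖G p - G q‖ ≤ LG * ‖p - q‖ := by
    intro p hp q hq
    exact hBconv.norm_image_sub_le_of_norm_fderiv_le
      (fun x _ => (hG.differentiable one_ne_zero).differentiableAt)
      (fun x hx => le_trans (hLG' x hx) (le_max_left _ _)) hq hp
  -- uniform bounds for F and G on B
  obtain ⟨MF', hMF'⟩ := hBcomp.exists_bound_of_continuousOn hF.continuous.continuousOn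
  obtain ⟨MG', hMG'⟩ := hBcomp.exists_bound_of_continuousOn hG.continuous.continuousOn
  set MF : ℝ := max MF' 0 with hMFdef
  set MG : ℝ := max MG' 0 with hMGdef
  have hMF : ∀ p ∈ B, ‖F p‖ ≤ MF := fun p hp => le_trans (hMF' p hp) (le_max_left _ _)
  have hMG : ∀ p ∈ B, ‖G p‖ ≤ MG := fun p hp => le_trans (hMG' p hp) (le_max_left _ _)
  have hMF0 : 0 ≤ MF := le_max_right _ _
  have hMG0 : 0 ≤ MG := le_max_right _ _
  set M : ℝ := MF + κ₀ * MG with hMdef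
  have hM0 : 0 ≤ M := by positivity
  -- speed bound : ‖X κ s - X₀‖ ≤ M s
  have hXspeed : ∀ κ ∈ Ioc (0:ℝ) κ₀, ∀ s ∈ Icc (0:ℝ) T, ‖X κ s - X₀‖ ≤ M * s := by
    intro κ hκ s hs
    have := (convex_Icc (0:ℝ) T).norm_image_sub_le_of_norm_hasDerivWithin_le
      (f := X κ) (f' := fun s => F (s, X κ s) + κ • G (s, X κ s))
      (fun u hu => (hX κ hκ u hu).hasDerivWithinAt)
      (fun u hu => by
        have h1 : ‖F (u, X κ u)‖ ≤ MF := hMF _ (hXmem κ hκ u hu)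
        have h2 : ‖G (u, X κ u)‖ ≤ MG := hMG _ (hXmem κ hκ u hu)
        calc ‖F (u, X κ u) + κ • G (u, X κ u)‖
            ≤ ‖F (u, X κ u)‖ + ‖κ • G (u, X κ u)‖ := norm_add_le _ _
          _ ≤ MF + κ₀ * MG := by
              rw [norm_smul, Real.norm_eq_abs, abs_of_pos hκ.1]
              have : κ * ‖G (u, X κ u)‖ ≤ κ₀ * MG :=
                mul_le_mul hκ.2 h2 (norm_nonneg _) hκ₀.le
              linarith) ⟨le_refl 0, hT.le⟩ hs
    rw [hX0 κ hκ] at this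
    calc ‖X κ s - X₀‖ ≤ M * ‖s - 0‖ := this
      _ = M * s := by rw [sub_zero, Real.norm_eq_abs, abs_of_nonneg hs.1]
  -- the constants
  set G₀ := G (0, X₀) with hG₀def
  set C₁ : ℝ := LF * ‖G₀‖ + LG * (1 + M) with hC₁def
  have hC₁0 : 0 ≤ C₁ := by positivity
  set C : ℝ := (C₁ + 1) * Real.exp (LF * T) with hCdef
  have hC0 : 0 < C := by positivity
  refine ⟨T, ⟨hT, le_refl T⟩, κ₀, ⟨hκ₀, le_refl κ₀⟩, C, hC0, ?_⟩
  intro t ht κ hκ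
  -- the error function
  set Eκ : ℝ → EuclideanSpace ℝ (Fin m) := fun s => X κ s - Y s - (κ * s) • G₀ with hEdef
  set E' : ℝ → EuclideanSpace ℝ (Fin m) :=
    fun s => (F (s, X κ s) - F (s, Y s)) + κ • (G (s, X κ s) - G₀) with hE'def
  have hEderiv : ∀ s ∈ Icc (0:ℝ) T, HasDerivAt Eκ (E' s) s := by
    intro s hs
    have h1 : HasDerivAt (fun u => (κ * u) • G₀) (κ • G₀) s := by
      simpa using ((hasDerivAt_id s).const_mul κ).smul_const G₀
    have h2 := ((hX κ hκ s hs).sub (hY s hs)).sub h1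
    refine HasDerivAt.congr_deriv (f := Eκ) h2 ?_
    simp only [hE'def, smul_sub]
    abel
  have hE0 : Eκ 0 = 0 := by
    simp only [hEdef, hX0 κ hκ, hY0, mul_zero, zero_smul, sub_zero, sub_self]
  -- Grönwall on [0, t]
  have htT : Icc (0:ℝ) t ⊆ Icc (0:ℝ) T := Icc_subset_Icc (le_refl 0) ht.2
  have hEcont : ContinuousOn Eκ (Icc 0 t) := fun s hs =>
    (hEderiv s (htT hs)).continuousAt.continuousWithinAt
  have hEd : ∀ s ∈ Ico (0:ℝ) t, HasDerivWithinAt Eκ (E' s) (Ici s) s := fun s hs =>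
    (hEderiv s (htT ⟨hs.1, hs.2.le⟩)).hasDerivWithinAt
  have hbound : ∀ s ∈ Ico (0:ℝ) t, ‖E' s‖ ≤ LF * ‖Eκ s‖ + κ * C₁ * t := by
    intro s hs
    have hsT : s ∈ Icc (0:ℝ) T := htT ⟨hs.1, hs.2.le⟩
    have hpX : (s, X κ s) ∈ B := hXmem κ hκ s hsT
    have hpY : (s, Y s) ∈ B := hYmem s hsT
    -- F part
    have hFpart : ‖F (s, X κ s) - F (s, Y s)‖ ≤ LF * (‖Eκ s‖ + κ * s * ‖G₀‖) := by
      have h1 := lipF _ hpX _ hpY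
      have h2 : ‖(s, X κ s) - (s, Y s)‖ = ‖X κ s - Y s‖ := by
        simp [Prod.norm_def, norm_nonneg]
      have hκs : (0:ℝ) ≤ κ * s := mul_nonneg hκ.1.le hs.1
      have h3 : ‖X κ s - Y s‖ ≤ ‖Eκ s‖ + κ * s * ‖G₀‖ := by
        have heq : X κ s - Y s = Eκ s + (κ * s) • G₀ := by simp only [hEdef]; abel
        rw [heq]
        calc ‖Eκ s + (κ * s) • G₀‖ ≤ ‖Eκ s‖ + ‖(κ * s) • G₀‖ := norm_add_le _ _
          _ = ‖Eκ s‖ + κ * s * ‖G₀‖ := by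
              rw [norm_smul, Real.norm_eq_abs, abs_of_nonneg hκs]
      calc ‖F (s, X κ s) - F (s, Y s)‖ ≤ LF * ‖(s, X κ s) - (s, Y s)‖ := h1
        _ = LF * ‖X κ s - Y s‖ := by rw [h2]
        _ ≤ LF * (‖Eκ s‖ + κ * s * ‖G₀‖) := mul_le_mul_of_nonneg_left h3 hLF0
    -- G part
    have hGpart : ‖G (s, X κ s) - G₀‖ ≤ LG * ((1 + M) * s) := by
      have h1 := lipG _ hpX _ h0mem
      have h2 : ‖(s, X κ s) - ((0:ℝ), X₀)‖ ≤ (1 + M) * s := by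
        rw [Prod.norm_def]
        apply max_le
        · simp only [Prod.fst_sub, sub_zero, Real.norm_eq_abs, abs_of_nonneg hs.1]
          nlinarith [hs.1]
        · simp only [Prod.snd_sub]
          calc ‖X κ s - X₀‖ ≤ M * s := hXspeed κ hκ s hsT
            _ ≤ (1 + M) * s := by nlinarith [hs.1]
      calc ‖G (s, X κ s) - G₀‖ ≤ LG * ‖(s, X κ s) - ((0:ℝ), X₀)‖ := h1
        _ ≤ LG * ((1 + M) * s) := mul_le_mul_of_nonneg_left h2 hLG0
    have hst : s ≤ t := hs.2.le
    calc ‖E' s‖ ≤ ‖F (s, X κ s) - F (s, Y s)‖ + ‖κ • (G (s, X κ s) - G₀)‖ := norm_add_le _ _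
      _ = ‖F (s, X κ s) - F (s, Y s)‖ + κ * ‖G (s, X κ s) - G₀‖ := by
          rw [norm_smul, Real.norm_eq_abs, abs_of_pos hκ.1]
      _ ≤ LF * (‖Eκ s‖ + κ * s * ‖G₀‖) + κ * (LG * ((1 + M) * s)) := by
          have := mul_le_mul_of_nonneg_left hGpart hκ.1.le
          linarith
      _ = LF * ‖Eκ s‖ + κ * C₁ * s := by rw [hC₁def]; ring
      _ ≤ LF * ‖Eκ s‖ + κ * C₁ * t := by
          have : κ * C₁ * s ≤ κ * C₁ * t :=
            mul_le_mul_of_nonneg_left hst (mul_nonneg hκ.1.le hC₁0)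
          linarith
  have key := norm_le_gronwallBound_of_norm_deriv_right_le (a := 0) (b := t)
    (δ := 0) (K := LF) (ε := κ * C₁ * t)
    hEcont hEd (by rw [hE0]; simp) hbound t ⟨ht.1, le_refl t⟩
  rw [sub_zero] at key
  have hb : gronwallBound 0 LF (κ * C₁ * t) t ≤ (κ * C₁ * t) * t * Real.exp (LF * t) :=
    gronwall_aux hLF0 (mul_nonneg (mul_nonneg hκ.1.le hC₁0) ht.1) ht.1
  have hexp : Real.exp (LF * t) ≤ Real.exp (LF * T) :=
    Real.exp_le_exp.mpr (mul_le_mul_of_nonneg_left ht.2 hLF0)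
  have hfinal : (κ * C₁ * t) * t * Real.exp (LF * t) ≤ C * κ * t ^ 2 := by
    rw [hCdef]
    have h1 : (κ * C₁ * t) * t * Real.exp (LF * t) ≤ (κ * C₁ * t) * t * Real.exp (LF * T) :=
      mul_le_mul_of_nonneg_left hexp
        (mul_nonneg (mul_nonneg (mul_nonneg hκ.1.le hC₁0) ht.1) ht.1)
    have h2 : (κ * C₁ * t) * t * Real.exp (LF * T) ≤ (C₁ + 1) * Real.exp (LF * T) * κ * t ^ 2 := by
      have heq : (κ * C₁ * t) * t * Real.exp (LF * T) = C₁ * (Real.exp (LF * T) * κ * t ^ 2) := by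
        ring
      have heq2 : (C₁ + 1) * Real.exp (LF * T) * κ * t ^ 2
          = (C₁ + 1) * (Real.exp (LF * T) * κ * t ^ 2) := by ring
      rw [heq, heq2]
      apply mul_le_mul_of_nonneg_right (by linarith)
      exact mul_nonneg (mul_nonneg (Real.exp_pos _).le hκ.1.le) (sq_nonneg t)
    linarith
  calc ‖X κ t - Y t - (κ * t) • G₀‖ = ‖Eκ t‖ := rfl
    _ ≤ gronwallBound 0 LF (κ * C₁ * t) t := key
    _ ≤ (κ * C₁ * t) * t * Real.exp (LF * t) := hb
    _ ≤ C * κ * t ^ 2 := hfinal
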